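/- Let D ≥ 3 and let α, β ∈ ℝ. On the vector space a = so(D) ⊕ ℝ^D ⊕ ℝ, with elements written A + P_v + cH (A ∈ so(D), v ∈ ℝ^D, c ∈ ℝ), define the skew-symmetric bilinear bracket by [A,A'] = AA' − A'A, [A,P_v] = P_{Av}, [A,H] = 0, [H,P_v] = αP_v, and [P_u,P_v] = β(uvᵀ − vuᵀ) ∈ so(D). Then this bracket satisfies the Jacobi identity (i.e., makes a a Lie algebra) if and only if αβ = 0. -/
import Mathlib


open Matrix

noncomputable section

namespace Stmt14

/-- `so(D)`: the real skew-symmetric `D × D` matrices. -/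
def soD (D : ℕ) : Submodule ℝ (Matrix (Fin D) (Fin D) ℝ) where
  carrier := {M | Mᵀ = -M}
  add_mem' := fun {a b} ha hb => by
    simp only [Set.mem_setOf_eq] at ha hb ⊢
    rw [Matrix.transpose_add, ha, hb, neg_add]
  zero_mem' := by simp only [Set.mem_setOf_eq, Matrix.transpose_zero, neg_zero]
  smul_mem' := fun c a ha => by
    simp only [Set.mem_setOf_eq] at ha ⊢
    rw [Matrix.transpose_smul, ha, smul_neg]

theorem mem_soD {D : ℕ} {M : Matrix (Fin D) (Fin D) ℝ} : M ∈ soD D ↔ Mᵀ = -M := Iff.rfl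

/-- The commutator `AA' − A'A` of two skew-symmetric matrices, as an element of `so(D)`. -/
def soComm {D : ℕ} (A B : soD D) : soD D :=
  ⟨A.val * B.val - B.val * A.val, by
    have hA : (A.val)ᵀ = -A.val := A.2
    have hB : (B.val)ᵀ = -B.val := B.2
    rw [mem_soD, Matrix.transpose_sub, Matrix.transpose_mul, Matrix.transpose_mul, hA, hB,
      neg_mul_neg, neg_mul_neg, neg_sub]⟩

/-- `uvᵀ − vuᵀ` as an element of `so(D)`. -/
def outer {D : ℕ} (u v : Fin D → ℝ) : soD D :=
  ⟨vecMulVec u v - vecMulVec v u, by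
    rw [mem_soD]
    ext i j
    simp only [Matrix.transpose_apply, Matrix.sub_apply, Matrix.neg_apply, Matrix.vecMulVec_apply]
    ring⟩

/-- The underlying vector space `a = so(D) ⊕ ℝ^D ⊕ ℝ`, an element `(A, v, c)` standing
for `A + P_v + cH`. -/
abbrev AV (D : ℕ) := soD D × (Fin D → ℝ) × ℝ

/-- The skew-symmetric bilinear bracket on `a` determined by `[A,A'] = AA' − A'A`,
`[A,P_v] = P_{Av}`, `[A,H] = 0`, `[H,P_v] = αP_v` and `[P_u,P_v] = β(uvᵀ − vuᵀ)`. -/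
def ariBr {D : ℕ} (α β : ℝ) (X Y : AV D) : AV D :=
  (soComm X.1 Y.1 + β • outer X.2.1 Y.2.1,
   X.1.val.mulVec Y.2.1 - Y.1.val.mulVec X.2.1 + (α * X.2.2) • Y.2.1 - (α * Y.2.2) • X.2.1,
   0)

end Stmt14

namespace Stmt14Aux

open Stmt14

variable {D : ℕ}

lemma vmv_mul (u v : Fin D → ℝ) (C : Matrix (Fin D) (Fin D) ℝ) :
    vecMulVec u v * C = vecMulVec u (Cᵀ.mulVec v) := by
  ext i j
  simp only [mul_apply, vecMulVec_apply, mulVec, dotProduct, transpose_apply, Finset.mul_sum]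
  exact Finset.sum_congr rfl fun k _ => by ring

lemma mul_vmv (C : Matrix (Fin D) (Fin D) ℝ) (u v : Fin D → ℝ) :
    C * vecMulVec u v = vecMulVec (C.mulVec u) v := by
  ext i j
  simp only [mul_apply, vecMulVec_apply, mulVec, dotProduct, Finset.sum_mul]
  exact Finset.sum_congr rfl fun k _ => by ring

lemma vmv_mulVec (u v w : Fin D → ℝ) :
    (vecMulVec u v).mulVec w = (v ⬝ᵥ w) • u := by
  ext i
  simp only [mulVec, vecMulVec_apply, dotProduct, Pi.smul_apply, smul_eq_mul, Finset.sum_mul]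
  exact Finset.sum_congr rfl fun k _ => by ring

lemma vmv_add_left (u v w : Fin D → ℝ) :
    vecMulVec (u + v) w = vecMulVec u w + vecMulVec v w := by
  ext i j; simp [vecMulVec_apply]; ring

lemma vmv_add_right (u v w : Fin D → ℝ) :
    vecMulVec u (v + w) = vecMulVec u v + vecMulVec u w := by
  ext i j; simp [vecMulVec_apply]; ring

lemma vmv_sub_left (u v w : Fin D → ℝ) :
    vecMulVec (u - v) w = vecMulVec u w - vecMulVec v w := by
  ext i j; simp [vecMulVec_apply]; ring

lemma vmv_sub_right (u v w : Fin D → ℝ) :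
    vecMulVec u (v - w) = vecMulVec u v - vecMulVec u w := by
  ext i j; simp [vecMulVec_apply]; ring

lemma vmv_neg_left (u w : Fin D → ℝ) : vecMulVec (-u) w = -vecMulVec u w := by
  ext i j; simp [vecMulVec_apply]

lemma vmv_neg_right (u w : Fin D → ℝ) : vecMulVec u (-w) = -vecMulVec u w := by
  ext i j; simp [vecMulVec_apply]

lemma vmv_smul_left (c : ℝ) (u w : Fin D → ℝ) :
    vecMulVec (c • u) w = c • vecMulVec u w := by
  ext i j; simp [vecMulVec_apply]; ring

lemma vmv_smul_right (c : ℝ) (u w : Fin D → ℝ) :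
    vecMulVec u (c • w) = c • vecMulVec u w := by
  ext i j; simp [vecMulVec_apply]; ring

lemma vmv_zero_left (w : Fin D → ℝ) : vecMulVec (0 : Fin D → ℝ) w = 0 := by
  ext i j; simp [vecMulVec_apply]

lemma vmv_zero_right (u : Fin D → ℝ) : vecMulVec u (0 : Fin D → ℝ) = 0 := by
  ext i j; simp [vecMulVec_apply]

end Stmt14Aux

open Stmt14Aux

open Stmt14 in
/-- For `D ≥ 3`, the bracket on `so(D) ⊕ ℝ^D ⊕ ℝ` given by `[A,A'] = AA' − A'A`,
`[A,P_v] = P_{Av}`, `[A,H] = 0`, `[H,P_v] = αP_v`, `[P_u,P_v] = β(uvᵀ − vuᵀ)` satisfies the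
Jacobi identity (i.e., makes `a` a Lie algebra) if and only if `αβ = 0`. -/
theorem stmt14 (D : ℕ) (hD : 3 ≤ D) (α β : ℝ) :
    (∀ X Y Z : AV D,
        ariBr α β (ariBr α β X Y) Z + ariBr α β (ariBr α β Y Z) X
          + ariBr α β (ariBr α β Z X) Y = 0) ↔ α * β = 0 := by
  constructor
  · intro hJ
    set i0 : Fin D := ⟨0, by omega⟩ with hi0
    set i1 : Fin D := ⟨1, by omega⟩ with hi1
    have hne : i0 ≠ i1 := by simp [hi0, hi1, Fin.ext_iff]
    have h := hJ (0, 0, 1) (0, Pi.single i0 1, 0) (0, Pi.single i1 1, 0)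
    have h2 := congrArg (fun t : AV D => ((t.1 : soD D) : Matrix (Fin D) (Fin D) ℝ) i0 i1) h
    simp only [ariBr, soComm, outer, Prod.fst_add, Submodule.coe_add, SetLike.val_smul,
      ZeroMemClass.coe_zero, zero_mul, mul_zero, sub_zero, zero_sub, Matrix.zero_mulVec,
      Matrix.mulVec_zero, smul_zero, zero_smul, add_zero, zero_add, mul_one,
      Matrix.add_apply, Matrix.smul_apply, Matrix.sub_apply, Matrix.zero_apply,
      vecMulVec_apply, Pi.smul_apply, Pi.zero_apply, Pi.single_apply, smul_eq_mul,
      Pi.sub_apply, Pi.neg_apply, Prod.fst_zero, if_true] at h2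
    simp only [if_neg hne, if_neg (Ne.symm hne), if_pos rfl] at h2
    nlinarith [h2]
  · intro hab
    intro X Y Z
    obtain ⟨⟨A, hA⟩, u, a⟩ := X
    obtain ⟨⟨B, hB⟩, v, b⟩ := Y
    obtain ⟨⟨C, hC⟩, w, c⟩ := Z
    have hA' : Aᵀ = -A := hA
    have hB' : Bᵀ = -B := hB
    have hC' : Cᵀ = -C := hC
    rcases mul_eq_zero.mp hab with rfl | rfl
    all_goals {
      refine Prod.ext (Subtype.ext ?_) (Prod.ext ?_ ?_)
      · simp only [ariBr, soComm, outer, Prod.fst_add, Prod.fst_zero, Prod.snd_zero, Submodule.coe_add, SetLike.val_smul,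
          ZeroMemClass.coe_zero, zero_mul, zero_smul, add_zero, smul_zero, zero_add,
          sub_mul, mul_sub, add_mul, mul_add, smul_mul_assoc, mul_smul_comm, mul_assoc,
          vmv_mul, mul_vmv, hA', hB', hC', neg_mulVec,
          vmv_add_left, vmv_add_right, vmv_sub_left, vmv_sub_right,
          vmv_neg_left, vmv_neg_right, vmv_smul_left, vmv_smul_right,
          vmv_zero_left, vmv_zero_right, sub_zero]
        module
      · simp only [ariBr, soComm, outer, Prod.snd_add, Prod.fst_add, Prod.fst_zero, Prod.snd_zero, Submodule.coe_add,
          SetLike.val_smul, ZeroMemClass.coe_zero, zero_mul, zero_smul, add_zero, smul_zero,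
          zero_add, add_mulVec, sub_mulVec, smul_mulVec, ← mulVec_mulVec,
          mulVec_add, mulVec_sub, mulVec_smul, vmv_mulVec, dotProduct_comm, mulVec_zero, sub_zero]
        module
      · simp only [ariBr, Prod.snd_add, Prod.snd_zero]
        norm_num
    }
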